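/- Reweighting-only objective converges to the biased score (Appendix A.5, equations 42–43). Let k be a transition kernel, let q and r be the perturbed marginals of the strictly positive probability densities p_bias and p_data under k, and let w := r/q. Define J(s) := (1/2)∫∫ p_bias(x₀) k(x,x₀) w(x) ‖s(x) − ∇ log k(x,x₀)‖² dx dx₀ for measurable vector fields s : ℝ^d → ℝ^d with all integrals finite. Then there is a constant C, not depending on s, such that J(s) = (1/2)∫ q(x) w(x) ‖s(x) − ∇ log q(x)‖² dx + C for all admissible s; consequently s*(x) := ∇ log q(x) (the score of the perturbed biased distribution, not of the unbiased one) minimizes J, and any minimizer agrees with ∇ log q Lebesgue-almost everywhere. -/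

import Mathlib

open MeasureTheory
open Real InnerProductSpace Filter
open scoped Topology RealInnerProductSpace

noncomputable section

lemma gradient_log_comp' {F : Type*} [NormedAddCommGroup F] [InnerProductSpace ℝ F]
    [CompleteSpace F] {f : F → ℝ} {x : F} (hf : DifferentiableAt ℝ f x) (hfx : f x ≠ 0) :
    gradient (fun y => Real.log (f y)) x = (f x)⁻¹ • gradient f x := by
  have h : HasFDerivAt (fun y => Real.log (f y)) ((f x)⁻¹ • fderiv ℝ f x) x := by
    exact (Real.hasDerivAt_log hfx).comp_hasFDerivAt x hf.hasFDerivAt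
  rw [gradient, h.fderiv, _root_.map_smul, gradient]

lemma gradient_eq_sum' {d : ℕ} (f : EuclideanSpace ℝ (Fin d) → ℝ) (x : EuclideanSpace ℝ (Fin d)) :
    gradient f x = ∑ i, (fderiv ℝ f x (EuclideanSpace.basisFun (Fin d) ℝ i)) •
      (EuclideanSpace.basisFun (Fin d) ℝ i : EuclideanSpace ℝ (Fin d)) := by
  set b := EuclideanSpace.basisFun (Fin d) ℝ
  conv_lhs => rw [← b.sum_repr' (gradient f x)]
  refine Finset.sum_congr rfl fun i _ => ?_
  rw [real_inner_comm]
  rw [show gradient f x = (toDual ℝ _).symm (fderiv ℝ f x) from rfl,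
    InnerProductSpace.toDual_symm_apply]

lemma measurable_fderiv_param' {d : ℕ}
    {k : EuclideanSpace ℝ (Fin d) → EuclideanSpace ℝ (Fin d) → ℝ}
    (hk : Measurable (Function.uncurry k))
    (hsm : ∀ x₀, Differentiable ℝ (fun y => k y x₀))
    (x v : EuclideanSpace ℝ (Fin d)) :
    Measurable fun x₀ => fderiv ℝ (fun y => k y x₀) x v := by
  have key : ∀ x₀, Tendsto (fun n : ℕ => (k (x + ((n : ℝ) + 1)⁻¹ • v) x₀ - k x x₀) / ((n : ℝ) + 1)⁻¹)
      atTop (𝓝 (fderiv ℝ (fun y => k y x₀) x v)) := by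
    intro x₀
    have hcurve : HasDerivAt (fun t : ℝ => x + t • v) v 0 := by
      simpa using ((hasDerivAt_id (0:ℝ)).smul_const v).const_add x
    have hcomp : HasDerivAt (fun t : ℝ => k (x + t • v) x₀) (fderiv ℝ (fun y => k y x₀) x v) 0 := by
      have hf : HasFDerivAt (fun y => k y x₀) (fderiv ℝ (fun y => k y x₀) x) (x + (0:ℝ) • v) := by
        simpa using (hsm x₀).differentiableAt.hasFDerivAt (x := x)
      exact hf.comp_hasDerivAt 0 hcurve
    have hslope := hasDerivAt_iff_tendsto_slope.mp hcomp
    have htn : Tendsto (fun n : ℕ => ((n : ℝ) + 1)⁻¹) atTop (𝓝[≠] (0:ℝ)) := by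
      apply tendsto_nhdsWithin_of_tendsto_nhds_of_eventually_within
      · exact tendsto_one_div_add_atTop_nhds_zero_nat.congr (by intro n; simp [one_div])
      · filter_upwards with n
        simp only [Set.mem_compl_iff, Set.mem_singleton_iff]
        positivity
    have := hslope.comp htn
    refine this.congr fun n => ?_
    simp [slope_def_field, Function.comp, div_eq_mul_inv]
  refine measurable_of_tendsto_metrizable (f := fun n x₀ =>
    (k (x + ((n : ℝ) + 1)⁻¹ • v) x₀ - k x x₀) / ((n : ℝ) + 1)⁻¹) (fun n => ?_)
    (tendsto_pi_nhds.mpr key)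
  exact ((hk.comp measurable_prodMk_left).sub (hk.comp measurable_prodMk_left)).div_const _

lemma measurable_gradient_param' {d : ℕ}
    {k : EuclideanSpace ℝ (Fin d) → EuclideanSpace ℝ (Fin d) → ℝ}
    (hk : Measurable (Function.uncurry k))
    (hsm : ∀ x₀, Differentiable ℝ (fun y => k y x₀))
    (x : EuclideanSpace ℝ (Fin d)) :
    Measurable fun x₀ => gradient (fun y => k y x₀) x := by
  have h : (fun x₀ => gradient (fun y => k y x₀) x)
      = fun x₀ => ∑ i, (fderiv ℝ (fun y => k y x₀) x (EuclideanSpace.basisFun (Fin d) ℝ i)) •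
        (EuclideanSpace.basisFun (Fin d) ℝ i : EuclideanSpace ℝ (Fin d)) :=
    funext fun x₀ => gradient_eq_sum' _ _
  rw [h]
  exact Finset.measurable_sum _ fun i _ => (measurable_fderiv_param' hk hsm x _).smul_const _



/-- **Reweighting-only objective converges to the biased score**
(Appendix A.5, equations 42–43, of "Training Unbiased Diffusion Models From
Biased Dataset").  With
`J(s) := (1/2)∫∫ p_bias(x₀) k(x,x₀) w(x) ‖s(x) − ∇ log k(x,x₀)‖² dx dx₀`,
there is a constant `C` independent of `s` with
`J(s) = (1/2)∫ q(x) w(x) ‖s(x) − ∇ log q(x)‖² dx + C` for all admissible `s`;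
consequently `s* := ∇ log q` (the score of the perturbed *biased* distribution)
minimizes `J`, and any minimizer agrees with `∇ log q` Lebesgue-a.e. -/
theorem reweighting_only_objective
    {d : ℕ} (hd : 1 ≤ d)
    (pbias pdata : EuclideanSpace ℝ (Fin d) → ℝ)
    (hpbias_meas : Measurable pbias) (hpbias_pos : ∀ x₀, 0 < pbias x₀)
    (hpbias_prob : ∫ x₀, pbias x₀ = 1)
    (hpdata_meas : Measurable pdata) (hpdata_pos : ∀ x₀, 0 < pdata x₀)
    (hpdata_prob : ∫ x₀, pdata x₀ = 1)
    (k : EuclideanSpace ℝ (Fin d) → EuclideanSpace ℝ (Fin d) → ℝ)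
    (hk_meas : Measurable (Function.uncurry k))
    (hk_pos : ∀ x₀ x, 0 < k x x₀)
    (hk_prob : ∀ x₀, ∫ x, k x x₀ = 1)
    (hk_smooth : ∀ x₀, ContDiff ℝ 1 fun x => k x x₀)
    (q r : EuclideanSpace ℝ (Fin d) → ℝ)
    (hq_def : ∀ x, q x = ∫ x₀, pbias x₀ * k x x₀)
    (hq_pos : ∀ x, 0 < q x) (hq_diff : Differentiable ℝ q)
    (hq_grad : ∀ x, gradient q x = ∫ x₀, pbias x₀ • gradient (fun y => k y x₀) x)
    (hr_def : ∀ x, r x = ∫ x₀, pdata x₀ * k x x₀)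
    (hr_pos : ∀ x, 0 < r x) (hr_diff : Differentiable ℝ r)
    (hr_grad : ∀ x, gradient r x = ∫ x₀, pdata x₀ • gradient (fun y => k y x₀) x)
    (w : EuclideanSpace ℝ (Fin d) → ℝ)
    (hw_def : ∀ x, w x = r x / q x)
    -- the optimal field s* = ∇ log q is itself admissible
    (hstar_int : Integrable fun p : EuclideanSpace ℝ (Fin d) × EuclideanSpace ℝ (Fin d) =>
      pbias p.2 * k p.1 p.2 * w p.1 *
        ‖gradient (fun y => Real.log (q y)) p.1
          - gradient (fun y => Real.log (k y p.2)) p.1‖ ^ 2) :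
    -- decomposition: J(s) = (1/2)∫ q w ‖s − ∇ log q‖² + C, with C independent of s
    (∃ C : ℝ, ∀ s : EuclideanSpace ℝ (Fin d) → EuclideanSpace ℝ (Fin d),
      Measurable s →
      Integrable (fun p : EuclideanSpace ℝ (Fin d) × EuclideanSpace ℝ (Fin d) =>
        pbias p.2 * k p.1 p.2 * w p.1 *
          ‖s p.1 - gradient (fun y => Real.log (k y p.2)) p.1‖ ^ 2) →
      Integrable (fun x => q x * w x * ‖s x - gradient (fun y => Real.log (q y)) x‖ ^ 2) →
      (1 / 2) * (∫ x₀, ∫ x, pbias x₀ * k x x₀ * w x *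
          ‖s x - gradient (fun y => Real.log (k y x₀)) x‖ ^ 2)
        = (1 / 2) * (∫ x, q x * w x * ‖s x - gradient (fun y => Real.log (q y)) x‖ ^ 2)
          + C)
    ∧
    -- s* = ∇ log q minimizes J among admissible fields
    (∀ s : EuclideanSpace ℝ (Fin d) → EuclideanSpace ℝ (Fin d),
      Measurable s →
      Integrable (fun p : EuclideanSpace ℝ (Fin d) × EuclideanSpace ℝ (Fin d) =>
        pbias p.2 * k p.1 p.2 * w p.1 *
          ‖s p.1 - gradient (fun y => Real.log (k y p.2)) p.1‖ ^ 2) →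
      Integrable (fun x => q x * w x * ‖s x - gradient (fun y => Real.log (q y)) x‖ ^ 2) →
      (1 / 2) * (∫ x₀, ∫ x, pbias x₀ * k x x₀ * w x *
          ‖gradient (fun y => Real.log (q y)) x
            - gradient (fun y => Real.log (k y x₀)) x‖ ^ 2)
        ≤ (1 / 2) * ∫ x₀, ∫ x, pbias x₀ * k x x₀ * w x *
            ‖s x - gradient (fun y => Real.log (k y x₀)) x‖ ^ 2)
    ∧
    -- any admissible minimizer agrees with ∇ log q Lebesgue-a.e.
    (∀ s : EuclideanSpace ℝ (Fin d) → EuclideanSpace ℝ (Fin d),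
      Measurable s →
      Integrable (fun p : EuclideanSpace ℝ (Fin d) × EuclideanSpace ℝ (Fin d) =>
        pbias p.2 * k p.1 p.2 * w p.1 *
          ‖s p.1 - gradient (fun y => Real.log (k y p.2)) p.1‖ ^ 2) →
      Integrable (fun x => q x * w x * ‖s x - gradient (fun y => Real.log (q y)) x‖ ^ 2) →
      (1 / 2) * (∫ x₀, ∫ x, pbias x₀ * k x x₀ * w x *
          ‖s x - gradient (fun y => Real.log (k y x₀)) x‖ ^ 2)
        ≤ (1 / 2) * (∫ x₀, ∫ x, pbias x₀ * k x x₀ * w x *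
            ‖gradient (fun y => Real.log (q y)) x
              - gradient (fun y => Real.log (k y x₀)) x‖ ^ 2) →
      s =ᵐ[volume] fun x => gradient (fun y => Real.log (q y)) x) := by
  classical
  have hw_pos : ∀ x, 0 < w x := fun x => by
    rw [hw_def]; exact div_pos (hr_pos x) (hq_pos x)
  have hk_diff : ∀ x₀, Differentiable ℝ fun y => k y x₀ :=
    fun x₀ => (hk_smooth x₀).differentiable one_ne_zero
  have hu_int : ∀ x, Integrable fun x₀ => pbias x₀ * k x x₀ := by
    intro x
    by_contra h
    exact (hq_pos x).ne' (by rw [hq_def x, integral_undef h])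
  have hkL : ∀ x x₀, gradient (fun y => k y x₀) x
      = k x x₀ • gradient (fun y => Real.log (k y x₀)) x := by
    intro x x₀
    rw [gradient_log_comp' ((hk_diff x₀).differentiableAt) (hk_pos x₀ x).ne', smul_smul,
      mul_inv_cancel₀ (hk_pos x₀ x).ne', one_smul]
  have hGq : ∀ x, q x • gradient (fun y => Real.log (q y)) x = gradient q x := by
    intro x
    rw [gradient_log_comp' (hq_diff.differentiableAt) (hq_pos x).ne', smul_smul,
      mul_inv_cancel₀ (hq_pos x).ne', one_smul]
  have hm_meas : ∀ x, Measurable fun x₀ => pbias x₀ • gradient (fun y => k y x₀) x :=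
    fun x => hpbias_meas.smul (measurable_gradient_param' hk_meas hk_diff x)
  -- the core per-x computation
  have core : ∀ s : EuclideanSpace ℝ (Fin d) → EuclideanSpace ℝ (Fin d),
      ∀ x : EuclideanSpace ℝ (Fin d),
      Integrable (fun x₀ => pbias x₀ * k x x₀ * w x *
        ‖s x - gradient (fun y => Real.log (k y x₀)) x‖ ^ 2) →
      Integrable (fun x₀ => pbias x₀ * k x x₀ * w x *
        ‖gradient (fun y => Real.log (q y)) x - gradient (fun y => Real.log (k y x₀)) x‖ ^ 2) →
      (∫ x₀, pbias x₀ * k x x₀ * w x * ‖s x - gradient (fun y => Real.log (k y x₀)) x‖ ^ 2)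
        = q x * w x * ‖s x - gradient (fun y => Real.log (q y)) x‖ ^ 2
          + ∫ x₀, pbias x₀ * k x x₀ * w x *
            ‖gradient (fun y => Real.log (q y)) x - gradient (fun y => Real.log (k y x₀)) x‖ ^ 2 := by
    intro s x h1 h2
    set Gx := gradient (fun y => Real.log (q y)) x with hGxdef
    set a := s x - Gx with hadef
    have hwx := hw_pos x
    have h2' : Integrable fun x₀ => pbias x₀ * k x x₀ *
        ‖Gx - gradient (fun y => Real.log (k y x₀)) x‖ ^ 2 := by
      have h := h2.const_mul (w x)⁻¹
      refine h.congr (Eventually.of_forall fun x₀ => ?_)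
      field_simp
    have hm_int : Integrable fun x₀ => pbias x₀ • gradient (fun y => k y x₀) x := by
      refine Integrable.mono' (((hu_int x).mul_const (‖Gx‖ + 1)).add h2')
        ((hm_meas x).aestronglyMeasurable) (Eventually.of_forall fun x₀ => ?_)
      have hb : ‖pbias x₀ • gradient (fun y => k y x₀) x‖
          = pbias x₀ * k x x₀ * ‖gradient (fun y => Real.log (k y x₀)) x‖ := by
        rw [hkL x x₀, norm_smul, norm_smul]
        simp [abs_of_pos (hpbias_pos x₀), abs_of_pos (hk_pos x₀ x), mul_assoc]
      rw [hb]
      have hLn : ‖gradient (fun y => Real.log (k y x₀)) x‖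
          ≤ ‖Gx‖ + ‖Gx - gradient (fun y => Real.log (k y x₀)) x‖ := by
        have := norm_sub_le Gx (Gx - gradient (fun y => Real.log (k y x₀)) x)
        simpa using this
      have ht : ‖Gx - gradient (fun y => Real.log (k y x₀)) x‖
          ≤ 1 + ‖Gx - gradient (fun y => Real.log (k y x₀)) x‖ ^ 2 := by
        nlinarith [sq_nonneg (‖Gx - gradient (fun y => Real.log (k y x₀)) x‖ - 1)]
      have hpk : 0 ≤ pbias x₀ * k x x₀ :=
        mul_nonneg (hpbias_pos x₀).le (hk_pos x₀ x).le
      calc pbias x₀ * k x x₀ * ‖gradient (fun y => Real.log (k y x₀)) x‖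
          ≤ pbias x₀ * k x x₀ *
            ((‖Gx‖ + 1) + ‖Gx - gradient (fun y => Real.log (k y x₀)) x‖ ^ 2) :=
            mul_le_mul_of_nonneg_left (by linarith) hpk
        _ = pbias x₀ * k x x₀ * (‖Gx‖ + 1)
            + pbias x₀ * k x x₀ * ‖Gx - gradient (fun y => Real.log (k y x₀)) x‖ ^ 2 := by ring
    have hm_val : (∫ x₀, pbias x₀ • gradient (fun y => k y x₀) x) = q x • Gx :=
      (hq_grad x).symm.trans (hGq x).symm
    have hinner_int : Integrable fun x₀ => ⟪a, pbias x₀ • gradient (fun y => k y x₀) x⟫_ℝ := by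
      exact (innerSL ℝ a).integrable_comp hm_int
    have hcross_eq : ∀ x₀, pbias x₀ * k x x₀ *
        ⟪a, Gx - gradient (fun y => Real.log (k y x₀)) x⟫_ℝ
        = pbias x₀ * k x x₀ * ⟪a, Gx⟫_ℝ
          - ⟪a, pbias x₀ • gradient (fun y => k y x₀) x⟫_ℝ := by
      intro x₀
      rw [inner_sub_right, real_inner_smul_right, hkL x x₀, real_inner_smul_right]
      ring
    have hcross_int : Integrable fun x₀ => pbias x₀ * k x x₀ *
        ⟪a, Gx - gradient (fun y => Real.log (k y x₀)) x⟫_ℝ := by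
      have := ((hu_int x).mul_const (⟪a, Gx⟫_ℝ)).sub hinner_int
      exact this.congr (Eventually.of_forall fun x₀ => (hcross_eq x₀).symm)
    have hcross_val : (∫ x₀, pbias x₀ * k x x₀ *
        ⟪a, Gx - gradient (fun y => Real.log (k y x₀)) x⟫_ℝ) = 0 := by
      rw [integral_congr_ae (Eventually.of_forall hcross_eq),
        integral_sub ((hu_int x).mul_const _) hinner_int, integral_mul_const]
      have hc : (∫ x₀, ⟪a, pbias x₀ • gradient (fun y => k y x₀) x⟫_ℝ)
          = ⟪a, ∫ x₀, pbias x₀ • gradient (fun y => k y x₀) x⟫_ℝ := by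
        exact (innerSL ℝ a).integral_comp_comm hm_int
      rw [hc, hm_val, real_inner_smul_right, ← hq_def x]
      ring
    have hpt : ∀ x₀, pbias x₀ * k x x₀ * w x *
        ‖s x - gradient (fun y => Real.log (k y x₀)) x‖ ^ 2
        = pbias x₀ * k x x₀ * (w x * ‖a‖ ^ 2)
          + (2 * w x) * (pbias x₀ * k x x₀ *
              ⟪a, Gx - gradient (fun y => Real.log (k y x₀)) x⟫_ℝ)
          + pbias x₀ * k x x₀ * w x *
            ‖Gx - gradient (fun y => Real.log (k y x₀)) x‖ ^ 2 := by
      intro x₀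
      have hsplit : s x - gradient (fun y => Real.log (k y x₀)) x
          = a + (Gx - gradient (fun y => Real.log (k y x₀)) x) := by
        rw [hadef]; abel
      rw [hsplit, norm_add_sq_real]
      ring
    have hT1 : Integrable (fun x₀ => pbias x₀ * k x x₀ * (w x * ‖a‖ ^ 2)) volume :=
      (hu_int x).mul_const _
    have hT2 : Integrable (fun x₀ => (2 * w x) * (pbias x₀ * k x x₀ *
        ⟪a, Gx - gradient (fun y => Real.log (k y x₀)) x⟫_ℝ)) volume :=
      hcross_int.const_mul _
    have hT12 : Integrable (fun x₀ => pbias x₀ * k x x₀ * (w x * ‖a‖ ^ 2)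
        + (2 * w x) * (pbias x₀ * k x x₀ *
          ⟪a, Gx - gradient (fun y => Real.log (k y x₀)) x⟫_ℝ)) volume := hT1.add hT2
    calc (∫ x₀, pbias x₀ * k x x₀ * w x * ‖s x - gradient (fun y => Real.log (k y x₀)) x‖ ^ 2)
        = ∫ x₀, (pbias x₀ * k x x₀ * (w x * ‖a‖ ^ 2)
            + (2 * w x) * (pbias x₀ * k x x₀ *
              ⟪a, Gx - gradient (fun y => Real.log (k y x₀)) x⟫_ℝ)
            + pbias x₀ * k x x₀ * w x *
              ‖Gx - gradient (fun y => Real.log (k y x₀)) x‖ ^ 2) :=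
          integral_congr_ae (Eventually.of_forall hpt)
      _ = (∫ x₀, (pbias x₀ * k x x₀ * (w x * ‖a‖ ^ 2)
            + (2 * w x) * (pbias x₀ * k x x₀ *
              ⟪a, Gx - gradient (fun y => Real.log (k y x₀)) x⟫_ℝ)))
          + ∫ x₀, pbias x₀ * k x x₀ * w x *
              ‖Gx - gradient (fun y => Real.log (k y x₀)) x‖ ^ 2 := integral_add hT12 h2
      _ = ((∫ x₀, pbias x₀ * k x x₀ * (w x * ‖a‖ ^ 2))
            + ∫ x₀, (2 * w x) * (pbias x₀ * k x x₀ *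
              ⟪a, Gx - gradient (fun y => Real.log (k y x₀)) x⟫_ℝ))
          + ∫ x₀, pbias x₀ * k x x₀ * w x *
              ‖Gx - gradient (fun y => Real.log (k y x₀)) x‖ ^ 2 := by
            rw [integral_add hT1 hT2]
      _ = (q x * (w x * ‖a‖ ^ 2) + (2 * w x) * 0)
          + ∫ x₀, pbias x₀ * k x x₀ * w x *
              ‖Gx - gradient (fun y => Real.log (k y x₀)) x‖ ^ 2 := by
            rw [integral_mul_const, ← hq_def x, integral_const_mul, hcross_val]
      _ = q x * w x * ‖a‖ ^ 2
          + ∫ x₀, pbias x₀ * k x x₀ * w x *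
              ‖Gx - gradient (fun y => Real.log (k y x₀)) x‖ ^ 2 := by ring
  -- the main decomposition identity
  have main : ∀ s : EuclideanSpace ℝ (Fin d) → EuclideanSpace ℝ (Fin d),
      Measurable s →
      Integrable (fun p : EuclideanSpace ℝ (Fin d) × EuclideanSpace ℝ (Fin d) =>
        pbias p.2 * k p.1 p.2 * w p.1 *
          ‖s p.1 - gradient (fun y => Real.log (k y p.2)) p.1‖ ^ 2) →
      Integrable (fun x => q x * w x * ‖s x - gradient (fun y => Real.log (q y)) x‖ ^ 2) →
      (∫ x₀, ∫ x, pbias x₀ * k x x₀ * w x *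
          ‖s x - gradient (fun y => Real.log (k y x₀)) x‖ ^ 2)
        = (∫ x, q x * w x * ‖s x - gradient (fun y => Real.log (q y)) x‖ ^ 2)
          + ∫ x₀, ∫ x, pbias x₀ * k x x₀ * w x *
            ‖gradient (fun y => Real.log (q y)) x - gradient (fun y => Real.log (k y x₀)) x‖ ^ 2 := by
    intro s hs hs1 hs2
    have hs1' : Integrable (Function.uncurry fun x x₀ => pbias x₀ * k x x₀ * w x *
        ‖s x - gradient (fun y => Real.log (k y x₀)) x‖ ^ 2)
        ((volume : Measure (EuclideanSpace ℝ (Fin d))).prod volume) := by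
      rw [← Measure.volume_eq_prod]; exact hs1
    have hstar' : Integrable (Function.uncurry fun x x₀ => pbias x₀ * k x x₀ * w x *
        ‖gradient (fun y => Real.log (q y)) x - gradient (fun y => Real.log (k y x₀)) x‖ ^ 2)
        ((volume : Measure (EuclideanSpace ℝ (Fin d))).prod volume) := by
      rw [← Measure.volume_eq_prod]; exact hstar_int
    have hswap_s := integral_integral_swap hs1'
    have hswap_star := integral_integral_swap hstar'
    have hae : ∀ᵐ x : EuclideanSpace ℝ (Fin d),
        (∫ x₀, pbias x₀ * k x x₀ * w x *
          ‖s x - gradient (fun y => Real.log (k y x₀)) x‖ ^ 2)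
        = q x * w x * ‖s x - gradient (fun y => Real.log (q y)) x‖ ^ 2
          + ∫ x₀, pbias x₀ * k x x₀ * w x *
            ‖gradient (fun y => Real.log (q y)) x - gradient (fun y => Real.log (k y x₀)) x‖ ^ 2 := by
      filter_upwards [hs1'.prod_right_ae, hstar'.prod_right_ae] with x hx1 hx2
      exact core s x hx1 hx2
    calc (∫ x₀, ∫ x, pbias x₀ * k x x₀ * w x *
          ‖s x - gradient (fun y => Real.log (k y x₀)) x‖ ^ 2)
        = ∫ x, ∫ x₀, pbias x₀ * k x x₀ * w x *
            ‖s x - gradient (fun y => Real.log (k y x₀)) x‖ ^ 2 := hswap_s.symm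
      _ = ∫ x, (q x * w x * ‖s x - gradient (fun y => Real.log (q y)) x‖ ^ 2
            + ∫ x₀, pbias x₀ * k x x₀ * w x *
              ‖gradient (fun y => Real.log (q y)) x
                - gradient (fun y => Real.log (k y x₀)) x‖ ^ 2) := integral_congr_ae hae
      _ = (∫ x, q x * w x * ‖s x - gradient (fun y => Real.log (q y)) x‖ ^ 2)
            + ∫ x, ∫ x₀, pbias x₀ * k x x₀ * w x *
              ‖gradient (fun y => Real.log (q y)) x
                - gradient (fun y => Real.log (k y x₀)) x‖ ^ 2 :=
          integral_add hs2 hstar'.integral_prod_left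
      _ = (∫ x, q x * w x * ‖s x - gradient (fun y => Real.log (q y)) x‖ ^ 2)
            + ∫ x₀, ∫ x, pbias x₀ * k x x₀ * w x *
              ‖gradient (fun y => Real.log (q y)) x
                - gradient (fun y => Real.log (k y x₀)) x‖ ^ 2 := by rw [hswap_star]
  refine ⟨⟨(1 / 2) * ∫ x₀, ∫ x, pbias x₀ * k x x₀ * w x *
      ‖gradient (fun y => Real.log (q y)) x - gradient (fun y => Real.log (k y x₀)) x‖ ^ 2,
      fun s hs h1 h2 => by rw [main s hs h1 h2]; ring⟩,
    fun s hs h1 h2 => ?_, fun s hs h1 h2 hmin => ?_⟩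
  · have hmain := main s hs h1 h2
    have hnn : 0 ≤ ∫ x, q x * w x * ‖s x - gradient (fun y => Real.log (q y)) x‖ ^ 2 :=
      integral_nonneg fun x =>
        mul_nonneg (mul_nonneg (hq_pos x).le (hw_pos x).le) (by positivity)
    linarith
  · have hmain := main s hs h1 h2
    have hnn : 0 ≤ ∫ x, q x * w x * ‖s x - gradient (fun y => Real.log (q y)) x‖ ^ 2 :=
      integral_nonneg fun x =>
        mul_nonneg (mul_nonneg (hq_pos x).le (hw_pos x).le) (by positivity)
    have hI0 : (∫ x, q x * w x * ‖s x - gradient (fun y => Real.log (q y)) x‖ ^ 2) = 0 :=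
      le_antisymm (by linarith) hnn
    have hz := (integral_eq_zero_iff_of_nonneg (fun x =>
      mul_nonneg (mul_nonneg (hq_pos x).le (hw_pos x).le) (by positivity)) h2).mp hI0
    filter_upwards [hz] with x hx
    have hx' : q x * w x * ‖s x - gradient (fun y => Real.log (q y)) x‖ ^ 2 = 0 := hx
    have hqw : q x * w x ≠ 0 := (mul_pos (hq_pos x) (hw_pos x)).ne'
    have hsq : ‖s x - gradient (fun y => Real.log (q y)) x‖ ^ 2 = 0 := by
      rcases mul_eq_zero.mp hx' with h | h
      · exact absurd h hqw
      · exact h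
    have : s x - gradient (fun y => Real.log (q y)) x = 0 := by
      simpa [pow_eq_zero_iff] using hsq
    exact sub_eq_zero.mp this
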